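/- With the layered ancilla construction for measuring a logical operator on a quantum LDPC code where every stabilizer generator has weight at most w and every qubit is in the support of at most q stabilizer generators, the merged code has all stabilizer generators of weight at most max(w+3, q+3) and every qubit in the support of at most max(w+3, q+3) generators. -/

import Mathlib

open Finset

section

variable {V CX CZ : Type}

/-- Dual-layer ancilla qubits (one per layer): a qubit `c^T` for each Z-check `c`
adjacent to the support `L` of the measured logical operator. -/
abbrev DualIdx (AdjZ : CZ → V → Bool) (L : Finset V) : Type :=
  {c : CZ // (L.filter fun v => AdjZ c v).Nonempty}

/-- Qubits of the merged code: the original qubits, the dual-layer ancilla qubits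
(`r` dual layers), and the primal-layer ancilla qubits (`r - 1` primal layers, one
qubit per element of `L` per layer). -/
abbrev MergedQubit (AdjZ : CZ → V → Bool) (L : Finset V) (r : ℕ) : Type :=
  V ⊕ (DualIdx AdjZ L × Fin r) ⊕ (↥L × Fin (r - 1))

/-- X-type stabilizer generators of the merged code: the original X-checks together with
the ancilla generators `v^T[j]`, `v ∈ L`, `j` a dual layer. -/
abbrev MXGen (CX : Type) {V : Type} (L : Finset V) (r : ℕ) : Type := CX ⊕ (↥L × Fin r)

/-- Z-type stabilizer generators of the merged code: the (deformed) original Z-checks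
together with the primal-layer copies `c[j]` of the Z-checks adjacent to `L`. -/
abbrev MZGen (AdjZ : CZ → V → Bool) (L : Finset V) (r : ℕ) : Type :=
  CZ ⊕ (DualIdx AdjZ L × Fin (r - 1))

/-- Incidence of the X-type generators of the merged code with its qubits. -/
def mergedMX [DecidableEq V] (AdjX : CX → V → Bool) (AdjZ : CZ → V → Bool)
    (L : Finset V) (r : ℕ) :
    MXGen CX L r → MergedQubit AdjZ L r → Bool
  | Sum.inl c, Sum.inl v0 => AdjX c v0
  | Sum.inl _, Sum.inr _ => false
  | Sum.inr (v, j), Sum.inl v0 => decide ((v : V) = v0) && decide (j.val = 0)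
  | Sum.inr (v, j), Sum.inr (Sum.inl (c, k)) => decide (j = k) && AdjZ c.val (v : V)
  | Sum.inr (v, j), Sum.inr (Sum.inr (v', m)) =>
      decide (v' = v) && (decide (j.val = m.val) || decide (j.val = m.val + 1))

/-- Incidence of the Z-type generators of the merged code with its qubits: each original
Z-check adjacent to `L` is deformed by one extra (first dual layer) ancilla qubit, and the
primal-layer Z-checks act on their layer's primal qubits and the two neighbouring
dual-layer qubits. -/
def mergedMZ [DecidableEq V] [DecidableEq CZ] (AdjZ : CZ → V → Bool)
    (L : Finset V) (r : ℕ) :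
    MZGen AdjZ L r → MergedQubit AdjZ L r → Bool
  | Sum.inl c, Sum.inl v0 => AdjZ c v0
  | Sum.inl c, Sum.inr (Sum.inl (c', k)) => decide (c'.val = c) && decide (k.val = 0)
  | Sum.inl _, Sum.inr (Sum.inr _) => false
  | Sum.inr _, Sum.inl _ => false
  | Sum.inr (c, m), Sum.inr (Sum.inl (c', k)) =>
      decide (c' = c) && (decide (k.val = m.val) || decide (k.val = m.val + 1))
  | Sum.inr (c, m), Sum.inr (Sum.inr (v, m')) => decide (m' = m) && AdjZ c.val (v : V)

private lemma card_filter_sum {α β : Type} [Fintype α] [Fintype β] (p : α ⊕ β → Bool) :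
    (univ.filter fun x => p x).card
      = (univ.filter fun a => p (.inl a)).card + (univ.filter fun b => p (.inr b)).card := by
  rw [← Finset.univ_disjSum_univ]
  have h : ((univ : Finset α).disjSum univ).filter (fun x => p x)
      = (univ.filter fun a => p (.inl a)).disjSum (univ.filter fun b => p (.inr b)) := by
    ext x; cases x <;> simp
  rw [h, Finset.card_disjSum]

private lemma card_filter_le_one' {α : Type} [Fintype α] (p : α → Bool)
    (h : ∀ a b, p a = true → p b = true → a = b) :
    (univ.filter fun a => p a).card ≤ 1 := by
  refine Finset.card_le_one.2 fun a ha b hb => ?_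
  simp only [mem_filter] at ha hb
  exact h a b ha.2 hb.2

private lemma card_filter_le_map {α β : Type} [Fintype α] [DecidableEq β] (p : α → Bool)
    (t : Finset β) (f : α → β)
    (hmem : ∀ a, p a = true → f a ∈ t)
    (hinj : ∀ a b, p a = true → p b = true → f a = f b → a = b) :
    (univ.filter fun a => p a).card ≤ t.card := by
  apply Finset.card_le_card_of_injOn f
  · intro a ha; simp at ha; exact hmem a ha
  · intro a ha b hb hfab
    simp only [coe_filter, Set.mem_setOf_eq, mem_univ, true_and] at ha hb
    exact hinj a b ha hb hfab

private lemma card_filter_le_two' {α : Type} [Fintype α] (p : α → Bool) (f : α → ℕ) (n1 n2 : ℕ)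
    (hmem : ∀ a, p a = true → f a = n1 ∨ f a = n2)
    (hinj : ∀ a b, p a = true → p b = true → f a = f b → a = b) :
    (univ.filter fun a => p a).card ≤ 2 := by
  refine le_trans (card_filter_le_map p ({n1, n2} : Finset ℕ) f ?_ hinj) ?_
  · intro a ha; rcases hmem a ha with h | h <;> simp [h]
  · exact le_trans (Finset.card_insert_le _ _) (by simp)

private lemma card_filter_eq_zero' {α : Type} [Fintype α] (p : α → Bool)
    (h : ∀ a, p a = false) :
    (univ.filter fun a => p a).card = 0 := by
  rw [Finset.card_eq_zero, Finset.filter_eq_empty_iff]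
  intro a _
  simp [h a]

/-- if the original LDPC code has all stabilizer generators of weight at most
`w` and every qubit in the support of at most `q` generators, then the merged code obtained
from the layered ancilla construction has all stabilizer generators of weight at most
`max (w+3) (q+3)` and every qubit in the support of at most `max (w+3) (q+3)` generators. -/
theorem merged_code_is_LDPC
    [Fintype V] [Fintype CX] [Fintype CZ] [DecidableEq V] [DecidableEq CZ]
    (AdjX : CX → V → Bool) (AdjZ : CZ → V → Bool)
    (L : Finset V) (r w q : ℕ)
    (hwX : ∀ c : CX, (univ.filter fun v => AdjX c v).card ≤ w)
    (hwZ : ∀ c : CZ, (univ.filter fun v => AdjZ c v).card ≤ w)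
    (hq : ∀ v : V, (univ.filter fun c : CX => AdjX c v).card
        + (univ.filter fun c : CZ => AdjZ c v).card ≤ q) :
    (∀ g : MXGen CX L r,
        (univ.filter fun qb => mergedMX AdjX AdjZ L r g qb).card ≤ max (w + 3) (q + 3)) ∧
    (∀ g : MZGen AdjZ L r,
        (univ.filter fun qb => mergedMZ AdjZ L r g qb).card ≤ max (w + 3) (q + 3)) ∧
    (∀ qb : MergedQubit AdjZ L r,
        (univ.filter fun g : MXGen CX L r => mergedMX AdjX AdjZ L r g qb).card
          + (univ.filter fun g : MZGen AdjZ L r => mergedMZ AdjZ L r g qb).card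
          ≤ max (w + 3) (q + 3)) := by
  have hmw : w + 3 ≤ max (w + 3) (q + 3) := le_max_left _ _
  have hmq : q + 3 ≤ max (w + 3) (q + 3) := le_max_right _ _
  refine ⟨?_, ?_, ?_⟩
  · -- X generators
    intro g
    rw [card_filter_sum, card_filter_sum]
    cases g with
    | inl c =>
      have h1 : (univ.filter fun v0 : V =>
          mergedMX AdjX AdjZ L r (Sum.inl c) (Sum.inl v0)).card ≤ w := by
        exact hwX c
      have h2 : (univ.filter fun b : DualIdx AdjZ L × Fin r =>
          mergedMX AdjX AdjZ L r (Sum.inl c) (Sum.inr (Sum.inl b))).card = 0 :=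
        card_filter_eq_zero' _ (by rintro ⟨c', k⟩; simp [mergedMX])
      have h3 : (univ.filter fun b : ↥L × Fin (r - 1) =>
          mergedMX AdjX AdjZ L r (Sum.inl c) (Sum.inr (Sum.inr b))).card = 0 :=
        card_filter_eq_zero' _ (by rintro ⟨v', m⟩; simp [mergedMX])
      omega
    | inr vj =>
      obtain ⟨v, j⟩ := vj
      have h1 : (univ.filter fun v0 : V =>
          mergedMX AdjX AdjZ L r (Sum.inr (v, j)) (Sum.inl v0)).card ≤ 1 := by
        refine card_filter_le_one' _ fun a b ha hb => ?_
        simp only [mergedMX, Bool.and_eq_true, decide_eq_true_eq] at ha hb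
        rw [← ha.1, ← hb.1]
      have h2 : (univ.filter fun b : DualIdx AdjZ L × Fin r =>
          mergedMX AdjX AdjZ L r (Sum.inr (v, j)) (Sum.inr (Sum.inl b))).card ≤ q := by
        refine le_trans (card_filter_le_map _
          (univ.filter fun c : CZ => AdjZ c (v : V)) (fun b => b.1.val) ?_ ?_)
          (le_trans (Nat.le_add_left _ _) (hq (v : V)))
        · rintro ⟨c', k⟩ h
          simp only [mergedMX, Bool.and_eq_true, decide_eq_true_eq] at h
          simp [h.2]
        · rintro ⟨c1, k1⟩ ⟨c2, k2⟩ h1' h2' hf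
          simp only [mergedMX, Bool.and_eq_true, decide_eq_true_eq] at h1' h2'
          dsimp only at hf
          simp only [Prod.mk.injEq]
          exact ⟨Subtype.ext hf, by first | rw [h1'.1, h2'.1] | rw [← h1'.1, ← h2'.1]⟩
      have h3 : (univ.filter fun b : ↥L × Fin (r - 1) =>
          mergedMX AdjX AdjZ L r (Sum.inr (v, j)) (Sum.inr (Sum.inr b))).card ≤ 2 := by
        refine card_filter_le_two' _ (fun b => b.2.val) j.val (j.val - 1) ?_ ?_
        · rintro ⟨v', m⟩ h
          simp only [mergedMX, Bool.and_eq_true, Bool.or_eq_true, decide_eq_true_eq] at h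
          dsimp only
          omega
        · rintro ⟨v1, m1⟩ ⟨v2, m2⟩ h1' h2' hf
          simp only [mergedMX, Bool.and_eq_true, Bool.or_eq_true, decide_eq_true_eq] at h1' h2'
          dsimp only at hf
          simp only [Prod.mk.injEq]
          exact ⟨by first | rw [h1'.1, h2'.1] | rw [← h1'.1, ← h2'.1], Fin.ext hf⟩
      omega
  · -- Z generators
    intro g
    rw [card_filter_sum, card_filter_sum]
    cases g with
    | inl c =>
      have h1 : (univ.filter fun v0 : V =>
          mergedMZ AdjZ L r (Sum.inl c) (Sum.inl v0)).card ≤ w := by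
        exact hwZ c
      have h2 : (univ.filter fun b : DualIdx AdjZ L × Fin r =>
          mergedMZ AdjZ L r (Sum.inl c) (Sum.inr (Sum.inl b))).card ≤ 1 := by
        refine card_filter_le_one' _ fun a b ha hb => ?_
        obtain ⟨c1, k1⟩ := a; obtain ⟨c2, k2⟩ := b
        simp only [mergedMZ, Bool.and_eq_true, decide_eq_true_eq] at ha hb
        refine Prod.ext (Subtype.ext ?_) (Fin.ext ?_)
        · rw [ha.1, hb.1]
        · rw [ha.2, hb.2]
      have h3 : (univ.filter fun b : ↥L × Fin (r - 1) =>
          mergedMZ AdjZ L r (Sum.inl c) (Sum.inr (Sum.inr b))).card = 0 :=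
        card_filter_eq_zero' _ (by rintro ⟨v', m⟩; simp [mergedMZ])
      omega
    | inr cm =>
      obtain ⟨c, m⟩ := cm
      have h1 : (univ.filter fun v0 : V =>
          mergedMZ AdjZ L r (Sum.inr (c, m)) (Sum.inl v0)).card = 0 :=
        card_filter_eq_zero' _ (by intro a; simp [mergedMZ])
      have h2 : (univ.filter fun b : DualIdx AdjZ L × Fin r =>
          mergedMZ AdjZ L r (Sum.inr (c, m)) (Sum.inr (Sum.inl b))).card ≤ 2 := by
        refine card_filter_le_two' _ (fun b => b.2.val) m.val (m.val + 1) ?_ ?_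
        · rintro ⟨c', k⟩ h
          simp only [mergedMZ, Bool.and_eq_true, Bool.or_eq_true, decide_eq_true_eq] at h
          dsimp only
          omega
        · rintro ⟨c1, k1⟩ ⟨c2, k2⟩ h1' h2' hf
          simp only [mergedMZ, Bool.and_eq_true, Bool.or_eq_true, decide_eq_true_eq] at h1' h2'
          dsimp only at hf
          simp only [Prod.mk.injEq]
          exact ⟨by first | rw [h1'.1, h2'.1] | rw [← h1'.1, ← h2'.1], Fin.ext hf⟩
      have h3 : (univ.filter fun b : ↥L × Fin (r - 1) =>
          mergedMZ AdjZ L r (Sum.inr (c, m)) (Sum.inr (Sum.inr b))).card ≤ w := by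
        refine le_trans (card_filter_le_map _
          (univ.filter fun v : V => AdjZ c.val v) (fun b => (b.1 : V)) ?_ ?_) (hwZ c.val)
        · rintro ⟨v', m'⟩ h
          simp only [mergedMZ, Bool.and_eq_true, decide_eq_true_eq] at h
          simp [h.2]
        · rintro ⟨v1, m1⟩ ⟨v2, m2⟩ h1' h2' hf
          simp only [mergedMZ, Bool.and_eq_true, decide_eq_true_eq] at h1' h2'
          dsimp only at hf
          simp only [Prod.mk.injEq]
          exact ⟨Subtype.ext hf, by first | rw [h1'.1, h2'.1] | rw [← h1'.1, ← h2'.1]⟩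
      omega
  · -- qubit degrees
    intro qb
    rw [card_filter_sum (fun g : MXGen CX L r => mergedMX AdjX AdjZ L r g qb),
      card_filter_sum (fun g : MZGen AdjZ L r => mergedMZ AdjZ L r g qb)]
    cases qb with
    | inl v0 =>
      have h1 : (univ.filter fun c : CX =>
          mergedMX AdjX AdjZ L r (Sum.inl c) (Sum.inl v0)).card
          + (univ.filter fun c : CZ =>
          mergedMZ AdjZ L r (Sum.inl c) (Sum.inl v0)).card ≤ q := by
        exact hq v0
      have h2 : (univ.filter fun b : ↥L × Fin r =>
          mergedMX AdjX AdjZ L r (Sum.inr b) (Sum.inl v0)).card ≤ 1 := by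
        refine card_filter_le_one' _ fun a b ha hb => ?_
        obtain ⟨v1, j1⟩ := a; obtain ⟨v2, j2⟩ := b
        simp only [mergedMX, Bool.and_eq_true, decide_eq_true_eq] at ha hb
        refine Prod.ext (Subtype.ext ?_) (Fin.ext ?_)
        · rw [ha.1, hb.1]
        · rw [ha.2, hb.2]
      have h3 : (univ.filter fun b : DualIdx AdjZ L × Fin (r - 1) =>
          mergedMZ AdjZ L r (Sum.inr b) (Sum.inl v0)).card = 0 :=
        card_filter_eq_zero' _ (by rintro ⟨c', m⟩; simp [mergedMZ])
      omega
    | inr qb' =>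
      cases qb' with
      | inl ck =>
        obtain ⟨c, k⟩ := ck
        have h1 : (univ.filter fun c0 : CX =>
            mergedMX AdjX AdjZ L r (Sum.inl c0) (Sum.inr (Sum.inl (c, k)))).card = 0 :=
          card_filter_eq_zero' _ (by intro a; simp [mergedMX])
        have h2 : (univ.filter fun b : ↥L × Fin r =>
            mergedMX AdjX AdjZ L r (Sum.inr b) (Sum.inr (Sum.inl (c, k)))).card ≤ w := by
          refine le_trans (card_filter_le_map _
            (univ.filter fun v : V => AdjZ c.val v) (fun b => (b.1 : V)) ?_ ?_) (hwZ c.val)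
          · rintro ⟨v', j⟩ h
            simp only [mergedMX, Bool.and_eq_true, decide_eq_true_eq] at h
            simp [h.2]
          · rintro ⟨v1, j1⟩ ⟨v2, j2⟩ h1' h2' hf
            simp only [mergedMX, Bool.and_eq_true, decide_eq_true_eq] at h1' h2'
            dsimp only at hf
            simp only [Prod.mk.injEq]
            exact ⟨Subtype.ext hf, by first | rw [h1'.1, h2'.1] | rw [← h1'.1, ← h2'.1]⟩
        have h3 : (univ.filter fun c0 : CZ =>
            mergedMZ AdjZ L r (Sum.inl c0) (Sum.inr (Sum.inl (c, k)))).card ≤ 1 := by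
          refine card_filter_le_one' _ fun a b ha hb => ?_
          simp only [mergedMZ, Bool.and_eq_true, decide_eq_true_eq] at ha hb
          rw [← ha.1, ← hb.1]
        have h4 : (univ.filter fun b : DualIdx AdjZ L × Fin (r - 1) =>
            mergedMZ AdjZ L r (Sum.inr b) (Sum.inr (Sum.inl (c, k)))).card ≤ 2 := by
          refine card_filter_le_two' _ (fun b => b.2.val) k.val (k.val - 1) ?_ ?_
          · rintro ⟨c', m⟩ h
            simp only [mergedMZ, Bool.and_eq_true, Bool.or_eq_true, decide_eq_true_eq] at h
            dsimp only
            omega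
          · rintro ⟨c1, m1⟩ ⟨c2, m2⟩ h1' h2' hf
            simp only [mergedMZ, Bool.and_eq_true, Bool.or_eq_true, decide_eq_true_eq] at h1' h2'
            dsimp only at hf
            simp only [Prod.mk.injEq]
            exact ⟨by first | rw [h1'.1, h2'.1] | rw [← h1'.1, ← h2'.1], Fin.ext hf⟩
        omega
      | inr vm =>
        obtain ⟨v, m⟩ := vm
        have h1 : (univ.filter fun c0 : CX =>
            mergedMX AdjX AdjZ L r (Sum.inl c0) (Sum.inr (Sum.inr (v, m)))).card = 0 :=
          card_filter_eq_zero' _ (by intro a; simp [mergedMX])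
        have h2 : (univ.filter fun b : ↥L × Fin r =>
            mergedMX AdjX AdjZ L r (Sum.inr b) (Sum.inr (Sum.inr (v, m)))).card ≤ 2 := by
          refine card_filter_le_two' _ (fun b => b.2.val) m.val (m.val + 1) ?_ ?_
          · rintro ⟨v', j⟩ h
            simp only [mergedMX, Bool.and_eq_true, Bool.or_eq_true, decide_eq_true_eq] at h
            dsimp only
            omega
          · rintro ⟨v1, j1⟩ ⟨v2, j2⟩ h1' h2' hf
            simp only [mergedMX, Bool.and_eq_true, Bool.or_eq_true, decide_eq_true_eq] at h1' h2'
            dsimp only at hf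
            simp only [Prod.mk.injEq]
            exact ⟨by first | rw [h1'.1, h2'.1] | rw [← h1'.1, ← h2'.1], Fin.ext hf⟩
        have h3 : (univ.filter fun c0 : CZ =>
            mergedMZ AdjZ L r (Sum.inl c0) (Sum.inr (Sum.inr (v, m)))).card = 0 :=
          card_filter_eq_zero' _ (by intro a; simp [mergedMZ])
        have h4 : (univ.filter fun b : DualIdx AdjZ L × Fin (r - 1) =>
            mergedMZ AdjZ L r (Sum.inr b) (Sum.inr (Sum.inr (v, m)))).card ≤ q := by
          refine le_trans (card_filter_le_map _
            (univ.filter fun c : CZ => AdjZ c (v : V)) (fun b => b.1.val) ?_ ?_)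
            (le_trans (Nat.le_add_left _ _) (hq (v : V)))
          · rintro ⟨c', m'⟩ h
            simp only [mergedMZ, Bool.and_eq_true, decide_eq_true_eq] at h
            simp [h.2]
          · rintro ⟨c1, m1⟩ ⟨c2, m2⟩ h1' h2' hf
            simp only [mergedMZ, Bool.and_eq_true, decide_eq_true_eq] at h1' h2'
            dsimp only at hf
            simp only [Prod.mk.injEq]
            exact ⟨Subtype.ext hf, by first | rw [h1'.1, h2'.1] | rw [← h1'.1, ← h2'.1]⟩
        omega

end
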